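/- Let Φ be a root system in ℝ³ all of whose roots are unit vectors, and let G ⊂ Cl(3)_even be the group generated by all products αβ of pairs of roots α, β ∈ Φ under the Clifford product. Then G is closed under reversion and contains -1 (provided Φ contains two non-parallel roots), and therefore the set of elements of G, viewed as vectors in the 4-dimensional even subalgebra with inner product (R₁,R₂) = ½(R₁R̃₂ + R₂R̃₁), is a root system in ℝ⁴. -/

import Mathlib

open CliffordAlgebra

namespace SpinorAux
open CliffordAlgebra Matrix Complex

noncomputable section

abbrev M2 := Matrix (Fin 2) (Fin 2) ℂ

def pauli : (Fin 3 → ℝ) →ₗ[ℝ] M2 where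
  toFun v := !![(v 2 : ℂ), (v 0 : ℂ) - (v 1 : ℂ) * I; (v 0 : ℂ) + (v 1 : ℂ) * I, -(v 2 : ℂ)]
  map_add' v w := by ext i j; fin_cases i <;> fin_cases j <;> simp <;> ring
  map_smul' r v := by ext i j; fin_cases i <;> fin_cases j <;> simp <;> ring

variable (Q : QuadraticForm ℝ (Fin 3 → ℝ))

lemma pauli_sq (hQ : ∀ v : Fin 3 → ℝ, Q v = v 0 ^ 2 + v 1 ^ 2 + v 2 ^ 2) (v : Fin 3 → ℝ) :
    pauli v * pauli v = algebraMap ℝ M2 (Q v) := by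
  rw [hQ]
  ext i j
  fin_cases i <;> fin_cases j <;>
    simp [pauli, Matrix.mul_apply, Fin.sum_univ_two, Matrix.algebraMap_matrix_apply] <;>
    ring_nf <;> simp [I_sq] <;> ring

def cmap (hQ : ∀ v : Fin 3 → ℝ, Q v = v 0 ^ 2 + v 1 ^ 2 + v 2 ^ 2) :
    CliffordAlgebra Q →ₐ[ℝ] M2 := CliffordAlgebra.lift Q ⟨pauli, pauli_sq Q hQ⟩

lemma cmap_ι (hQ : ∀ v : Fin 3 → ℝ, Q v = v 0 ^ 2 + v 1 ^ 2 + v 2 ^ 2) (v : Fin 3 → ℝ) :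
    cmap Q hQ (ι Q v) = pauli v :=
  CliffordAlgebra.lift_ι_apply _ _ v

lemma algebraMap_inj (hQ : ∀ v : Fin 3 → ℝ, Q v = v 0 ^ 2 + v 1 ^ 2 + v 2 ^ 2) :
    Function.Injective (algebraMap ℝ (CliffordAlgebra Q)) := by
  intro r s h
  have h2 := congrArg (cmap Q hQ) h
  rw [AlgHom.commutes, AlgHom.commutes] at h2
  exact (algebraMap ℝ M2).injective h2

def u0 : Fin 3 → ℝ := ![1, 0, 0]
def u1 : Fin 3 → ℝ := ![0, 1, 0]
def u2 : Fin 3 → ℝ := ![0, 0, 1]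

def bas : Fin 8 → CliffordAlgebra Q :=
  ![1, ι Q u0, ι Q u1, ι Q u2, ι Q u0 * ι Q u1, ι Q u0 * ι Q u2, ι Q u1 * ι Q u2,
    ι Q u0 * ι Q u1 * ι Q u2]

variable (hQ : ∀ v : Fin 3 → ℝ, Q v = v 0 ^ 2 + v 1 ^ 2 + v 2 ^ 2)

include hQ

lemma sq0 : ι Q u0 * ι Q u0 = 1 := by
  rw [ι_sq_scalar]
  have h : Q u0 = 1 := by rw [hQ]; norm_num [u0, Matrix.cons_val_two, Matrix.vecHead, Matrix.vecTail]
  rw [h, _root_.map_one]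

lemma sq1 : ι Q u1 * ι Q u1 = 1 := by
  rw [ι_sq_scalar]
  have h : Q u1 = 1 := by rw [hQ]; norm_num [u1, Matrix.cons_val_two, Matrix.vecHead, Matrix.vecTail]
  rw [h, _root_.map_one]

lemma sq2 : ι Q u2 * ι Q u2 = 1 := by
  rw [ι_sq_scalar]
  have h : Q u2 = 1 := by rw [hQ]; norm_num [u2, Matrix.cons_val_two, Matrix.vecHead, Matrix.vecTail]
  rw [h, _root_.map_one]

lemma ortho01 : Q.IsOrtho u0 u1 := by
  show Q (u0 + u1) = Q u0 + Q u1
  rw [hQ, hQ, hQ]; norm_num [u0, u1, Matrix.cons_val_two, Matrix.vecHead, Matrix.vecTail]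

lemma ortho02 : Q.IsOrtho u0 u2 := by
  show Q (u0 + u2) = Q u0 + Q u2
  rw [hQ, hQ, hQ]; norm_num [u0, u2, Matrix.cons_val_two, Matrix.vecHead, Matrix.vecTail]

lemma ortho12 : Q.IsOrtho u1 u2 := by
  show Q (u1 + u2) = Q u1 + Q u2
  rw [hQ, hQ, hQ]; norm_num [u1, u2, Matrix.cons_val_two, Matrix.vecHead, Matrix.vecTail]

lemma vdecomp (v : Fin 3 → ℝ) :
    ι Q v = v 0 • ι Q u0 + v 1 • ι Q u1 + v 2 • ι Q u2 := by
  have h : v = v 0 • u0 + v 1 • u1 + v 2 • u2 := by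
    funext i; fin_cases i <;> simp [u0, u1, u2]
  calc ι Q v = ι Q (v 0 • u0 + v 1 • u1 + v 2 • u2) := by rw [← h]
    _ = v 0 • ι Q u0 + v 1 • ι Q u1 + v 2 • ι Q u2 := by
        rw [map_add, map_add, _root_.map_smul, _root_.map_smul, _root_.map_smul]

lemma bas_span : Submodule.span ℝ (Set.range (bas Q)) = ⊤ := by
  set a := ι Q u0 with ha
  set b := ι Q u1 with hb
  set c := ι Q u2 with hc
  set V := Submodule.span ℝ (Set.range (bas Q)) with hV
  have sa : a * a = 1 := sq0 Q hQ
  have sb : b * b = 1 := sq1 Q hQ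
  have sc : c * c = 1 := sq2 Q hQ
  have hba : b * a = -(a * b) := ι_mul_ι_comm_of_isOrtho (ortho01 Q hQ).symm
  have hca : c * a = -(a * c) := ι_mul_ι_comm_of_isOrtho (ortho02 Q hQ).symm
  have hcb : c * b = -(b * c) := ι_mul_ι_comm_of_isOrtho (ortho12 Q hQ).symm
  have mem : ∀ k : Fin 8, bas Q k ∈ V := fun k => Submodule.subset_span ⟨k, rfl⟩
  have m0 : (1 : CliffordAlgebra Q) ∈ V := mem 0
  have m1 : a ∈ V := mem 1
  have m2 : b ∈ V := mem 2
  have m3 : c ∈ V := mem 3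
  have m4 : a * b ∈ V := mem 4
  have m5 : a * c ∈ V := mem 5
  have m6 : b * c ∈ V := mem 6
  have m7 : a * b * c ∈ V := mem 7
  have stable : ∀ w : CliffordAlgebra Q, (∀ k : Fin 8, w * bas Q k ∈ V) →
      ∀ y ∈ V, w * y ∈ V := by
    intro w hw y hy
    induction hy using Submodule.span_induction with
    | mem z hz => obtain ⟨k, rfl⟩ := hz; exact hw k
    | zero => rw [mul_zero]; exact V.zero_mem
    | add y z _ _ ihy ihz => rw [mul_add]; exact V.add_mem ihy ihz
    | smul t y _ ihy => rw [mul_smul_comm]; exact V.smul_mem t ihy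
  have stA : ∀ y ∈ V, a * y ∈ V := by
    refine stable a fun k => ?_
    fin_cases k
    · show a * 1 ∈ V; rw [mul_one]; exact m1
    · show a * a ∈ V; rw [sa]; exact m0
    · show a * b ∈ V; exact m4
    · show a * c ∈ V; exact m5
    · show a * (a * b) ∈ V; rw [← mul_assoc, sa, one_mul]; exact m2
    · show a * (a * c) ∈ V; rw [← mul_assoc, sa, one_mul]; exact m3
    · show a * (b * c) ∈ V; rw [← mul_assoc]; exact m7
    · show a * (a * b * c) ∈ V
      rw [← mul_assoc, ← mul_assoc, sa, one_mul]; exact m6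
  have eqBab : b * (a * b) = -a := by
    rw [← mul_assoc, hba, neg_mul, mul_assoc, sb, mul_one]
  have stB : ∀ y ∈ V, b * y ∈ V := by
    refine stable b fun k => ?_
    fin_cases k
    · show b * 1 ∈ V; rw [mul_one]; exact m2
    · show b * a ∈ V; rw [hba]; exact V.neg_mem m4
    · show b * b ∈ V; rw [sb]; exact m0
    · show b * c ∈ V; exact m6
    · show b * (a * b) ∈ V; rw [eqBab]; exact V.neg_mem m1
    · show b * (a * c) ∈ V
      rw [← mul_assoc, hba, neg_mul]; exact V.neg_mem m7
    · show b * (b * c) ∈ V; rw [← mul_assoc, sb, one_mul]; exact m3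
    · show b * (a * b * c) ∈ V
      rw [← mul_assoc, eqBab, neg_mul]; exact V.neg_mem m5
  have eqCab : c * (a * b) = a * b * c := by
    rw [← mul_assoc, hca, neg_mul, mul_assoc, hcb, mul_neg, neg_neg, ← mul_assoc]
  have stC : ∀ y ∈ V, c * y ∈ V := by
    refine stable c fun k => ?_
    fin_cases k
    · show c * 1 ∈ V; rw [mul_one]; exact m3
    · show c * a ∈ V; rw [hca]; exact V.neg_mem m5
    · show c * b ∈ V; rw [hcb]; exact V.neg_mem m6
    · show c * c ∈ V; rw [sc]; exact m0
    · show c * (a * b) ∈ V; rw [eqCab]; exact m7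
    · show c * (a * c) ∈ V
      rw [← mul_assoc, hca, neg_mul, mul_assoc, sc, mul_one]; exact V.neg_mem m1
    · show c * (b * c) ∈ V
      rw [← mul_assoc, hcb, neg_mul, mul_assoc, sc, mul_one]; exact V.neg_mem m2
    · show c * (a * b * c) ∈ V
      rw [← mul_assoc, eqCab, mul_assoc, sc, mul_one]; exact m4
  have key : ∀ x : CliffordAlgebra Q, ∀ y ∈ V, x * y ∈ V := by
    intro x
    induction x using CliffordAlgebra.induction with
    | algebraMap r => intro y hy; rw [← Algebra.smul_def]; exact V.smul_mem r hy
    | ι v =>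
      intro y hy
      rw [vdecomp Q hQ v, add_mul, add_mul, smul_mul_assoc, smul_mul_assoc, smul_mul_assoc]
      exact V.add_mem (V.add_mem (V.smul_mem _ (stA y hy)) (V.smul_mem _ (stB y hy)))
        (V.smul_mem _ (stC y hy))
    | mul x y ihx ihy => intro z hz; rw [mul_assoc]; exact ihx _ (ihy z hz)
    | add x y ihx ihy => intro z hz; rw [add_mul]; exact V.add_mem (ihx z hz) (ihy z hz)
  rw [eq_top_iff]
  intro x _
  have h := key x 1 m0
  rwa [mul_one] at h

end

end SpinorAux

namespace SpinorAux
noncomputable section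
open CliffordAlgebra Matrix Complex

variable (Q : QuadraticForm ℝ (Fin 3 → ℝ))
variable (hQ : ∀ v : Fin 3 → ℝ, Q v = v 0 ^ 2 + v 1 ^ 2 + v 2 ^ 2)

omit hQ in
lemma pauli_u0 : pauli u0 = !![0, 1; 1, 0] := by
  ext i j; fin_cases i <;> fin_cases j <;> norm_num [pauli, u0, Matrix.cons_val_two, Matrix.vecHead, Matrix.vecTail]

omit hQ in
lemma pauli_u1 : pauli u1 = !![0, -I; I, 0] := by
  ext i j; fin_cases i <;> fin_cases j <;> norm_num [pauli, u1, Matrix.cons_val_two, Matrix.vecHead, Matrix.vecTail]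

omit hQ in
lemma pauli_u2 : pauli u2 = !![1, 0; 0, -1] := by
  ext i j; fin_cases i <;> fin_cases j <;> norm_num [pauli, u2, Matrix.cons_val_two, Matrix.vecHead, Matrix.vecTail]

include hQ

lemma pm_one (x : CliffordAlgebra Q)
    (hcm : ∀ v : Fin 3 → ℝ, ι Q v * x = x * ι Q v)
    (hi : involute x = x) (hn : x * reverse x = 1) : x = 1 ∨ x = -1 := by
  have hxmem : x ∈ Submodule.span ℝ (Set.range (bas Q)) := by
    rw [bas_span Q hQ]; trivial
  rw [Submodule.mem_span_range_iff_exists_fun] at hxmem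
  obtain ⟨c, hx⟩ := hxmem
  set F := cmap Q hQ with hF
  have hb0 : bas Q 0 = 1 := rfl
  have hb1 : bas Q 1 = ι Q u0 := rfl
  have hb2 : bas Q 2 = ι Q u1 := rfl
  have hb3 : bas Q 3 = ι Q u2 := rfl
  have hb4 : bas Q 4 = ι Q u0 * ι Q u1 := rfl
  have hb5 : bas Q 5 = ι Q u0 * ι Q u2 := rfl
  have hb6 : bas Q 6 = ι Q u1 * ι Q u2 := rfl
  have hb7 : bas Q 7 = ι Q u0 * ι Q u1 * ι Q u2 := rfl
  have hF0 : F (bas Q 0) = 1 := by rw [hb0, _root_.map_one]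
  have hF1 : F (bas Q 1) = !![0, 1; 1, 0] := by rw [hb1, cmap_ι, pauli_u0]
  have hF2 : F (bas Q 2) = !![0, -I; I, 0] := by rw [hb2, cmap_ι, pauli_u1]
  have hF3 : F (bas Q 3) = !![1, 0; 0, -1] := by rw [hb3, cmap_ι, pauli_u2]
  have hF4 : F (bas Q 4) = !![I, 0; 0, -I] := by
    rw [hb4, _root_.map_mul, cmap_ι, cmap_ι, pauli_u0, pauli_u1]
    ext i j; fin_cases i <;> fin_cases j <;>
      simp [Matrix.mul_apply, Fin.sum_univ_two]
  have hF5 : F (bas Q 5) = !![0, -1; 1, 0] := by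
    rw [hb5, _root_.map_mul, cmap_ι, cmap_ι, pauli_u0, pauli_u2]
    ext i j; fin_cases i <;> fin_cases j <;>
      simp [Matrix.mul_apply, Fin.sum_univ_two]
  have hF6 : F (bas Q 6) = !![0, I; I, 0] := by
    rw [hb6, _root_.map_mul, cmap_ι, cmap_ι, pauli_u1, pauli_u2]
    ext i j; fin_cases i <;> fin_cases j <;>
      simp [Matrix.mul_apply, Fin.sum_univ_two]
  have hF7 : F (bas Q 7) = !![I, 0; 0, I] := by
    rw [hb7, _root_.map_mul, _root_.map_mul, cmap_ι, cmap_ι, cmap_ι, pauli_u0, pauli_u1, pauli_u2]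
    ext i j; fin_cases i <;> fin_cases j <;>
      simp [Matrix.mul_apply, Fin.sum_univ_two]
  have hFx : F x = !![(c 0 : ℂ) + c 3 + (c 4 + c 7) * I, (c 1 : ℂ) - c 5 + (c 6 - c 2) * I;
      (c 1 : ℂ) + c 5 + (c 2 + c 6) * I, (c 0 : ℂ) - c 3 + (c 7 - c 4) * I] := by
    rw [← hx, map_sum, Fin.sum_univ_eight]
    rw [_root_.map_smul, _root_.map_smul, _root_.map_smul, _root_.map_smul,
      _root_.map_smul, _root_.map_smul, _root_.map_smul, _root_.map_smul,
      hF0, hF1, hF2, hF3, hF4, hF5, hF6, hF7]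
    ext i j
    fin_cases i <;> fin_cases j <;>
      simp [Matrix.one_apply] <;> ring
  -- commutation with pauli u2 kills c 1, c 2, c 5, c 6
  have h2 := congrArg F (hcm u2)
  rw [_root_.map_mul, _root_.map_mul, cmap_ι, pauli_u2, hFx] at h2
  have e01 := congrFun (congrFun h2 0) 1
  have e10 := congrFun (congrFun h2 1) 0
  simp [Matrix.mul_apply, Fin.sum_univ_two] at e01 e10
  have r1 : c 1 - c 5 = 0 := by
    have h := congrArg Complex.re e01; simp at h; linarith
  have r2 : c 6 - c 2 = 0 := by
    have h := congrArg Complex.im e01; simp at h; linarith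
  have r3 : c 1 + c 5 = 0 := by
    have h := congrArg Complex.re e10; simp at h; linarith
  have r4 : c 2 + c 6 = 0 := by
    have h := congrArg Complex.im e10; simp at h; linarith
  -- commutation with pauli u0 kills c 3, c 4
  have h0 := congrArg F (hcm u0)
  rw [_root_.map_mul, _root_.map_mul, cmap_ι, pauli_u0, hFx] at h0
  have f01 := congrFun (congrFun h0 0) 1
  simp [Matrix.mul_apply, Fin.sum_univ_two] at f01
  have r5 : c 3 = 0 := by
    have h := congrArg Complex.re f01; simp at h; linarith
  have r6 : c 4 = 0 := by
    have h := congrArg Complex.im f01; simp at h; linarith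
  have hc1 : c 1 = 0 := by linarith
  have hc2 : c 2 = 0 := by linarith
  have hc5 : c 5 = 0 := by linarith
  have hc6 : c 6 = 0 := by linarith
  have hc3 : c 3 = 0 := r5
  have hc4 : c 4 = 0 := r6
  rw [Fin.sum_univ_eight, hc1, hc2, hc3, hc4, hc5, hc6] at hx
  simp only [zero_smul, add_zero, zero_add] at hx
  rw [hb0, hb7] at hx
  -- use involute to kill c 7
  have hinv : involute (ι Q u0 * ι Q u1 * ι Q u2) = -(ι Q u0 * ι Q u1 * ι Q u2) := by
    rw [_root_.map_mul, _root_.map_mul, involute_ι, involute_ι, involute_ι,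
      neg_mul_neg, mul_neg]
  have hi2 : c 0 • (1 : CliffordAlgebra Q) - c 7 • (ι Q u0 * ι Q u1 * ι Q u2)
      = c 0 • 1 + c 7 • (ι Q u0 * ι Q u1 * ι Q u2) := by
    conv_rhs => rw [hx, ← hi, ← hx]
    rw [map_add, _root_.map_smul, _root_.map_smul, _root_.map_one, hinv, smul_neg,
      sub_eq_add_neg]
  have hc7s : c 7 • (ι Q u0 * ι Q u1 * ι Q u2) = 0 := by
    have h4 := hi2
    rw [sub_eq_add_neg] at h4
    have h3 := add_left_cancel h4
    have h5 : c 7 • (ι Q u0 * ι Q u1 * ι Q u2) + c 7 • (ι Q u0 * ι Q u1 * ι Q u2) = 0 := by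
      nth_rewrite 1 [← h3]
      exact neg_add_cancel _
    have h6 : (2 : ℝ) • (c 7 • (ι Q u0 * ι Q u1 * ι Q u2)) = 0 := by
      rw [two_smul]; exact h5
    rcases smul_eq_zero.mp h6 with h | h
    · norm_num at h
    · exact h
  have hc7 : c 7 = 0 := by
    rcases smul_eq_zero.mp hc7s with h | h
    · exact h
    · exfalso
      have := congrArg F h
      rw [← hb7, hF7, map_zero] at this
      have := congrFun (congrFun this 0) 0
      simpa using this
  rw [hc7, zero_smul, add_zero] at hx
  -- now x = c 0 • 1
  have hrev : reverse x = x := by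
    rw [← hx, _root_.map_smul, reverse.map_one]
  rw [hrev, ← hx] at hn
  have e : (c 0 • (1 : CliffordAlgebra Q)) * (c 0 • 1) = (c 0 * c 0) • 1 := by
    rw [smul_mul_assoc, one_mul, smul_smul]
  rw [e] at hn
  have hn2 := hn
  have h1 : c 0 * c 0 = 1 := by
    apply algebraMap_inj Q hQ
    rw [Algebra.algebraMap_eq_smul_one, Algebra.algebraMap_eq_smul_one, one_smul]
    exact hn2
  rcases mul_self_eq_one_iff.mp h1 with h | h
  · left; rw [← hx, h, one_smul]
  · right; rw [← hx, h, neg_smul, one_smul]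
end
end SpinorAux

/-- Induction theorem: from a 3D root system `Φ` of unit roots, the group `G` of even
products of roots in the Clifford algebra of ℝ³ is closed under reversion, contains
`-1` (given two non-parallel roots), and — viewed as a set of vectors in the
4-dimensional even subalgebra with inner product `(R₁,R₂) = ½(R₁R̃₂ + R₂R̃₁), with
reflections `R₂ ↦ -R₁R̃₂R₁` — forms a root system in ℝ⁴. -/

theorem spinor_induction_root_system
    (Q : QuadraticForm ℝ (Fin 3 → ℝ))
    (hQ : ∀ v : Fin 3 → ℝ, Q v = v 0 ^ 2 + v 1 ^ 2 + v 2 ^ 2)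
    (Φ : Set (Fin 3 → ℝ)) (hfin : Φ.Finite)
    (hspan : Submodule.span ℝ Φ = ⊤)
    (hunit : ∀ α ∈ Φ, α 0 ^ 2 + α 1 ^ 2 + α 2 ^ 2 = 1)
    (hneg : ∀ α ∈ Φ, -α ∈ Φ)
    (hmult : ∀ α ∈ Φ, ∀ t : ℝ, t • α ∈ Φ → t = 1 ∨ t = -1)
    (hrefl : ∀ α ∈ Φ, ∀ x ∈ Φ,
      x - (2 * (x 0 * α 0 + x 1 * α 1 + x 2 * α 2)) • α ∈ Φ)
    (hnp : ∃ α ∈ Φ, ∃ β ∈ Φ, ∀ t : ℝ, β ≠ t • α) :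
    let G : Submonoid (CliffordAlgebra Q) :=
      Submonoid.closure {x | ∃ α ∈ Φ, ∃ β ∈ Φ, x = ι Q α * ι Q β}
    (∀ g ∈ G, reverse g ∈ G) ∧
    (-1 : CliffordAlgebra Q) ∈ G ∧
    (G : Set (CliffordAlgebra Q)).Finite ∧
    (∀ R ∈ G, -R ∈ G) ∧
    (∀ R ∈ G, ∀ t : ℝ, t • R ∈ G → t = 1 ∨ t = -1) ∧
    (∀ R₁ ∈ G, ∀ R₂ ∈ G, -(R₁ * reverse R₂ * R₁) ∈ G) := by
  intro G
  have hQ1 : ∀ α ∈ Φ, Q α = 1 := fun α hα => by rw [hQ]; exact hunit α hα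
  have hsq : ∀ α ∈ Φ, ι Q α * ι Q α = 1 := fun α hα => by
    rw [ι_sq_scalar, hQ1 α hα, _root_.map_one]
  -- closure under reversion
  have hrev : ∀ g ∈ G, reverse g ∈ G := by
    intro g hg
    induction hg using Submonoid.closure_induction with
    | mem x hx =>
      obtain ⟨α, hα, β, hβ, rfl⟩ := hx
      rw [reverse.map_mul, reverse_ι, reverse_ι]
      exact Submonoid.subset_closure ⟨β, hβ, α, hα, rfl⟩
    | one => rw [reverse.map_one]; exact one_mem _
    | mul x y hx hy ihx ihy => rw [reverse.map_mul]; exact mul_mem ihy ihx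
  -- norm-one and evenness properties
  have hnorm : ∀ g ∈ G, g * reverse g = 1 ∧ reverse g * g = 1 ∧ involute g = g := by
    intro g hg
    induction hg using Submonoid.closure_induction with
    | mem x hx =>
      obtain ⟨α, hα, β, hβ, rfl⟩ := hx
      rw [reverse.map_mul, reverse_ι, reverse_ι]
      refine ⟨?_, ?_, ?_⟩
      · rw [mul_assoc, ← mul_assoc (ι Q β), hsq β hβ, one_mul, hsq α hα]
      · rw [mul_assoc, ← mul_assoc (ι Q α), hsq α hα, one_mul, hsq β hβ]
      · rw [_root_.map_mul, involute_ι, involute_ι, neg_mul_neg]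
    | one =>
      refine ⟨?_, ?_, _root_.map_one involute⟩ <;>
        rw [reverse.map_one, one_mul]
    | mul x y hx hy ihx ihy =>
      refine ⟨?_, ?_, ?_⟩
      · rw [reverse.map_mul, mul_assoc, ← mul_assoc y, ihy.1, one_mul, ihx.1]
      · rw [reverse.map_mul, mul_assoc, ← mul_assoc (reverse x), ihx.2.1, one_mul, ihy.2.1]
      · rw [_root_.map_mul, ihx.2.2, ihy.2.2]
  -- -1 ∈ G
  have hneg1 : (-1 : CliffordAlgebra Q) ∈ G := by
    obtain ⟨α, hα, β, hβ, -⟩ := hnp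
    apply Submonoid.subset_closure
    refine ⟨α, hα, -α, hneg α hα, ?_⟩
    rw [map_neg, mul_neg, hsq α hα]
  have hnegmem : ∀ R ∈ G, -R ∈ G := by
    intro R hR
    have h := mul_mem hneg1 hR
    rwa [neg_one_mul] at h
  -- the reflection sandwich
  have sandwich : ∀ b ∈ Φ, ∀ y ∈ Φ, ∃ z ∈ Φ, ι Q b * ι Q y * ι Q b = ι Q z := by
    intro b hb y hy
    have hpol : QuadraticMap.polar Q b y = 2 * (y 0 * b 0 + y 1 * b 1 + y 2 * b 2) := by
      simp only [QuadraticMap.polar, hQ, Pi.add_apply]; ring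
    refine ⟨-(y - (2 * (y 0 * b 0 + y 1 * b 1 + y 2 * b 2)) • b),
      hneg _ (hrefl b hb y hy), ?_⟩
    rw [ι_mul_ι_comm, sub_mul, ← Algebra.smul_def, mul_assoc, hsq b hb, mul_one, hpol,
      map_neg, map_sub, _root_.map_smul, neg_sub]
  -- conjugation action on roots
  have conj : ∀ R ∈ G, ∀ α ∈ Φ, ∃ β ∈ Φ, R * ι Q α * reverse R = ι Q β := by
    intro R hR
    induction hR using Submonoid.closure_induction with
    | mem x hx =>
      obtain ⟨a, ha, b, hb, rfl⟩ := hx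
      intro α hα
      obtain ⟨γ, hγ, hbγ⟩ := sandwich b hb α hα
      obtain ⟨δ, hδ, haδ⟩ := sandwich a ha γ hγ
      refine ⟨δ, hδ, ?_⟩
      rw [reverse.map_mul, reverse_ι, reverse_ι]
      calc ι Q a * ι Q b * ι Q α * (ι Q b * ι Q a)
          = ι Q a * (ι Q b * ι Q α * ι Q b) * ι Q a := by noncomm_ring
        _ = ι Q a * ι Q γ * ι Q a := by rw [hbγ]
        _ = ι Q δ := haδ
    | one =>
      intro α hα
      exact ⟨α, hα, by rw [reverse.map_one, one_mul, mul_one]⟩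
    | mul x y hx hy ihx ihy =>
      intro α hα
      obtain ⟨β, hβ, hyβ⟩ := ihy α hα
      obtain ⟨γ, hγ, hxγ⟩ := ihx β hβ
      refine ⟨γ, hγ, ?_⟩
      rw [reverse.map_mul]
      calc x * y * ι Q α * (reverse y * reverse x)
          = x * (y * ι Q α * reverse y) * reverse x := by noncomm_ring
        _ = x * ι Q β * reverse x := by rw [hyβ]
        _ = ι Q γ := hxγ
  -- extending commutation from Φ to all vectors
  have extend : ∀ x : CliffordAlgebra Q, (∀ α ∈ Φ, ι Q α * x = x * ι Q α) →
      ∀ v : Fin 3 → ℝ, ι Q v * x = x * ι Q v := by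
    intro x hx
    let p : Submodule ℝ (Fin 3 → ℝ) :=
      { carrier := {v | ι Q v * x = x * ι Q v}
        add_mem' := by
          intro a b ha hb
          show ι Q (a + b) * x = x * ι Q (a + b)
          rw [map_add, add_mul, mul_add]
          rw [show ι Q a * x = x * ι Q a from ha, show ι Q b * x = x * ι Q b from hb]
        zero_mem' := by
          show ι Q 0 * x = x * ι Q 0
          rw [map_zero, zero_mul, mul_zero]
        smul_mem' := by
          intro t v hv
          show ι Q (t • v) * x = x * ι Q (t • v)
          rw [_root_.map_smul, smul_mul_assoc, mul_smul_comm,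
            show ι Q v * x = x * ι Q v from hv] }
    have hle : Submodule.span ℝ Φ ≤ p := Submodule.span_le.mpr fun α hα => hx α hα
    rw [hspan] at hle
    exact fun v => hle Submodule.mem_top
  -- fibers of the conjugation map
  have fiber : ∀ R ∈ G, ∀ R' ∈ G,
      (∀ α ∈ Φ, R * ι Q α * reverse R = R' * ι Q α * reverse R') →
      R' = R ∨ R' = -R := by
    intro R hR R' hR' hsame
    set xx := reverse R' * R with hxx
    have hxxG : xx ∈ G := mul_mem (hrev R' hR') hR
    have hrevxx : reverse xx = reverse R * R' := by
      rw [hxx, reverse.map_mul, reverse_reverse]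
    have hcomm : ∀ α ∈ Φ, ι Q α * xx = xx * ι Q α := by
      intro α hα
      have h := hsame α hα
      have h2 : xx * ι Q α * reverse xx = ι Q α := by
        rw [hrevxx, hxx]
        calc reverse R' * R * ι Q α * (reverse R * R')
            = reverse R' * (R * ι Q α * reverse R) * R' := by noncomm_ring
          _ = reverse R' * (R' * ι Q α * reverse R') * R' := by rw [h]
          _ = (reverse R' * R') * ι Q α * (reverse R' * R') := by noncomm_ring
          _ = ι Q α := by rw [(hnorm R' hR').2.1, one_mul, mul_one]
      calc ι Q α * xx = (xx * ι Q α * reverse xx) * xx := by rw [h2]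
        _ = xx * ι Q α * (reverse xx * xx) := by noncomm_ring
        _ = xx * ι Q α := by rw [(hnorm xx hxxG).2.1, mul_one]
    have hall := extend xx hcomm
    have hRR : R' * xx = R := by
      rw [hxx, ← mul_assoc, (hnorm R' hR').1, one_mul]
    obtain h1 | h1 := SpinorAux.pm_one Q hQ xx hall (hnorm xx hxxG).2.2 (hnorm xx hxxG).1
    · left; rw [h1, mul_one] at hRR; exact hRR
    · right
      rw [h1, mul_neg_one] at hRR
      rw [← hRR, neg_neg]
  -- finiteness
  have hfinG : (G : Set (CliffordAlgebra Q)).Finite := by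
    haveI : Finite ↥Φ := hfin.to_subtype
    set m : CliffordAlgebra Q → (↥Φ → CliffordAlgebra Q) :=
      fun R α => R * ι Q ↑α * reverse R with hm
    have hT : (Set.pi Set.univ fun _ : ↥Φ => ι Q '' Φ).Finite :=
      Set.Finite.pi fun _ => hfin.image _
    have himg : (m '' (G : Set (CliffordAlgebra Q))).Finite := by
      refine hT.subset ?_
      rintro _ ⟨R, hR, rfl⟩
      rw [Set.mem_pi]
      intro α _
      obtain ⟨β, hβ, hRβ⟩ := conj R hR α α.2
      exact ⟨β, hβ, hRβ.symm⟩
    have hsub : (G : Set (CliffordAlgebra Q)) ⊆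
        ⋃ y ∈ m '' (G : Set (CliffordAlgebra Q)), {R | R ∈ G ∧ m R = y} :=
      fun R hR => Set.mem_biUnion (Set.mem_image_of_mem m hR) ⟨hR, rfl⟩
    refine Set.Finite.subset (Set.Finite.biUnion himg ?_) hsub
    rintro y ⟨R₀, hR₀, rfl⟩
    refine Set.Finite.subset ((Set.finite_singleton (-R₀)).insert R₀) ?_
    rintro R ⟨hRG, hmR⟩
    have hsame : ∀ α ∈ Φ, R₀ * ι Q α * reverse R₀ = R * ι Q α * reverse R := by
      intro α hα
      exact (congrFun hmR ⟨α, hα⟩).symm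
    rcases fiber R₀ hR₀ R hRG hsame with h | h
    · exact Set.mem_insert_iff.mpr (Or.inl h)
    · exact Set.mem_insert_iff.mpr (Or.inr (by simp [h]))
  -- scalar multiples
  have hsmul : ∀ R ∈ G, ∀ t : ℝ, t • R ∈ G → t = 1 ∨ t = -1 := by
    intro R hR t htR
    have h1 := (hnorm _ htR).1
    rw [_root_.map_smul, smul_mul_assoc, mul_smul_comm, smul_smul, (hnorm R hR).1] at h1
    rw [← Algebra.algebraMap_eq_smul_one] at h1
    have h2 : t * t = 1 := by
      apply SpinorAux.algebraMap_inj Q hQ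
      rw [h1, _root_.map_one]
    exact mul_self_eq_one_iff.mp h2
  exact ⟨hrev, hneg1, hfinG, hnegmem, hsmul,
    fun R₁ h1 R₂ h2 => hnegmem _ (mul_mem (mul_mem h1 (hrev R₂ h2)) h1)⟩
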